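/- Set I = v1·I_{W1} and J = h1^{m11} h2^{m21}·(h1,v2)^{(m12−m11)_+} (ideals of R, viewed as R-submodules of R). Then the sequence 0 → I ∩ J → I ⊕ J → I + J → 0, where the first map sends x to (x, −x) and the second sends (x, y) to x + y, is a short exact sequence of R-modules; moreover I + J = I_W and I ∩ J = v1 h1^{m11} h2^{m21}·(h1,v2)^{(m12−m11)_+}. -/

import Mathlib

open MvPolynomial Pointwise

section FatAux

variable {k : Type*} [Field k]

private lemma fat_le_single_add {i j : Fin 4} (hij : i ≠ j) {a b : ℕ} {s : Fin 4 →₀ ℕ}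
    (ha : a ≤ s i) (hb : b ≤ s j) :
    Finsupp.single i a + Finsupp.single j b ≤ s := by
  refine Finsupp.le_def.mpr fun x => ?_
  simp only [Finsupp.add_apply, Finsupp.single_apply]
  split_ifs with h h' h'
  · exact absurd (h.trans h'.symm) hij
  · subst h; omega
  · subst h'; omega
  · omega

private lemma fat_span_pow_eq (i j : Fin 4) (hij : i ≠ j) (m : ℕ) :
    (Ideal.span {X i, X j} : Ideal (MvPolynomial (Fin 4) k)) ^ m =
      Ideal.span ((fun s => monomial s (1 : k)) '' {s : Fin 4 →₀ ℕ | m ≤ s i + s j}) := by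
  apply le_antisymm
  · induction m with
    | zero =>
      rw [pow_zero, Ideal.one_eq_top, top_le_iff, Ideal.eq_top_iff_one]
      exact Ideal.subset_span ⟨0, by simp, by simp⟩
    | succ m ih =>
      rw [pow_succ]
      calc Ideal.span {X i, X j} ^ m * Ideal.span {X i, X j}
          ≤ Ideal.span ((fun s => monomial s (1:k)) '' {s : Fin 4 →₀ ℕ | m ≤ s i + s j}) *
              Ideal.span {X i, X j} := Ideal.mul_mono_left ih
        _ = Ideal.span (((fun s => monomial s (1:k)) '' {s : Fin 4 →₀ ℕ | m ≤ s i + s j}) *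
              {X i, X j}) := Ideal.span_mul_span' _ _
        _ ≤ _ := by
            rw [Ideal.span_le]
            rintro z hz
            rw [Set.mem_mul] at hz
            obtain ⟨x, hx, y, hy, rfl⟩ := hz
            obtain ⟨s, hs, rfl⟩ := hx
            simp only [Set.mem_setOf_eq] at hs
            apply Ideal.subset_span
            rcases hy with rfl | rfl
            · refine ⟨s + Finsupp.single i 1, ?_, ?_⟩
              · simp only [Set.mem_setOf_eq, Finsupp.add_apply, Finsupp.single_eq_same,
                  Finsupp.single_eq_of_ne hij]
                omega
              · simp only [monomial_add_single, pow_one]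
            · refine ⟨s + Finsupp.single j 1, ?_, ?_⟩
              · simp only [Set.mem_setOf_eq, Finsupp.add_apply, Finsupp.single_eq_same,
                  Finsupp.single_eq_of_ne hij.symm]
                omega
              · simp only [monomial_add_single, pow_one]
  · rw [Ideal.span_le]
    rintro z ⟨s, hs, rfl⟩
    show (monomial s (1:k)) ∈ (Ideal.span {X i, X j} : Ideal (MvPolynomial (Fin 4) k)) ^ m
    simp only [Set.mem_setOf_eq] at hs
    have ha : min (s i) m ≤ s i := min_le_left _ _
    have hb : m - min (s i) m ≤ s j := by omega
    have key : (monomial s (1:k)) =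
        monomial (s - (Finsupp.single i (min (s i) m) + Finsupp.single j (m - min (s i) m))) 1 *
          (X i ^ (min (s i) m) * X j ^ (m - min (s i) m)) := by
      rw [X_pow_eq_monomial, X_pow_eq_monomial, monomial_mul, monomial_mul, one_mul, one_mul]
      congr 1
      rw [tsub_add_cancel_of_le (fat_le_single_add hij ha hb)]
    rw [key]
    apply Ideal.mul_mem_left
    have hsplit : (Ideal.span {X i, X j} : Ideal (MvPolynomial (Fin 4) k)) ^ m =
        Ideal.span {X i, X j} ^ (min (s i) m) * Ideal.span {X i, X j} ^ (m - min (s i) m) := by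
      rw [← pow_add]; congr 1; omega
    rw [hsplit]
    exact Ideal.mul_mem_mul (Ideal.pow_mem_pow (Ideal.subset_span (by simp)) _)
      (Ideal.pow_mem_pow (Ideal.subset_span (by simp)) _)

private lemma fat_monomial_mem {S : Set (Fin 4 →₀ ℕ)} {d : Fin 4 →₀ ℕ} (hd : d ∈ S) (c : k) :
    monomial d c ∈ Ideal.span ((fun s => monomial s (1 : k)) '' S) := by
  have h : monomial d c = C c * monomial d 1 := by rw [C_mul_monomial, mul_one]
  rw [h]
  exact Ideal.mul_mem_left _ _ (Ideal.subset_span ⟨d, hd, rfl⟩)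

private lemma fat_X_eq (n : Fin 4) :
    (X n : MvPolynomial (Fin 4) k) = monomial (Finsupp.single n 1) 1 := by
  rw [← pow_one (X n : MvPolynomial (Fin 4) k), X_pow_eq_monomial]

private lemma fat_mem_monomial_mul {u : Fin 4 →₀ ℕ} {S : Set (Fin 4 →₀ ℕ)}
    {p : MvPolynomial (Fin 4) k} :
    p ∈ Ideal.span {monomial u (1:k)} * Ideal.span ((fun s => monomial s (1:k)) '' S) ↔
      ∀ d ∈ p.support, ∃ s ∈ S, u + s ≤ d := by
  have hset : ({monomial u (1:k)} : Set (MvPolynomial (Fin 4) k)) *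
      ((fun s => monomial s (1:k)) '' S)
      = (fun s => monomial s (1:k)) '' ((fun s => u + s) '' S) := by
    ext z
    constructor
    · rintro ⟨x, hx, y, hy, rfl⟩
      rw [Set.mem_singleton_iff] at hx
      obtain ⟨s, hs, rfl⟩ := hy
      subst hx
      exact ⟨u + s, ⟨s, hs, rfl⟩, by simp only [monomial_mul, one_mul]⟩
    · rintro ⟨_, ⟨s, hs, rfl⟩, rfl⟩
      have hm := Set.mul_mem_mul (Set.mem_singleton (monomial u (1:k)))
        (Set.mem_image_of_mem (fun s => monomial s (1:k)) hs)
      simpa only [monomial_mul, one_mul] using hm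
  rw [Ideal.span_mul_span', hset, mem_ideal_span_monomial_image]
  constructor
  · intro H d hd
    obtain ⟨s', ⟨s, hs, rfl⟩, hle⟩ := H d hd
    exact ⟨s, hs, hle⟩
  · intro H d hd
    obtain ⟨s, hs, hle⟩ := H d hd
    exact ⟨u + s, ⟨s, hs, rfl⟩, hle⟩

private lemma fat_X_sup (m11 m12 m21 : ℕ) :
    (Ideal.span {(X 0 : MvPolynomial (Fin 4) k), X 2} ^ m11 ⊓ Ideal.span {X 0, X 3} ^ m12 ⊓
        Ideal.span {X 1, X 2} ^ m21) ≤
      Ideal.span {(X 2 : MvPolynomial (Fin 4) k)} *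
          (Ideal.span {X 0, X 2} ^ (m11 - 1) ⊓ Ideal.span {X 0, X 3} ^ m12 ⊓
            Ideal.span {X 1, X 2} ^ (m21 - 1)) ⊔
        Ideal.span {(X 0 : MvPolynomial (Fin 4) k) ^ m11 * X 1 ^ m21} *
          Ideal.span {X 0, X 3} ^ (m12 - m11) := by
  intro p hp
  simp only [Submodule.mem_inf] at hp
  obtain ⟨⟨hpA, hpB⟩, hpC⟩ := hp
  rw [fat_span_pow_eq 0 2 (by decide), mem_ideal_span_monomial_image] at hpA
  rw [fat_span_pow_eq 0 3 (by decide), mem_ideal_span_monomial_image] at hpB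
  rw [fat_span_pow_eq 1 2 (by decide), mem_ideal_span_monomial_image] at hpC
  rw [← support_sum_monomial_coeff p]
  apply Ideal.sum_mem
  intro d hd
  obtain ⟨sA, hsA, hsAd⟩ := hpA d hd
  obtain ⟨sB, hsB, hsBd⟩ := hpB d hd
  obtain ⟨sC, hsC, hsCd⟩ := hpC d hd
  simp only [Set.mem_setOf_eq] at hsA hsB hsC
  have hA : m11 ≤ d 0 + d 2 :=
    hsA.trans (add_le_add (Finsupp.le_def.mp hsAd 0) (Finsupp.le_def.mp hsAd 2))
  have hB : m12 ≤ d 0 + d 3 :=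
    hsB.trans (add_le_add (Finsupp.le_def.mp hsBd 0) (Finsupp.le_def.mp hsBd 3))
  have hC : m21 ≤ d 1 + d 2 :=
    hsC.trans (add_le_add (Finsupp.le_def.mp hsCd 1) (Finsupp.le_def.mp hsCd 2))
  by_cases h2 : d 2 = 0
  · apply Submodule.mem_sup_right
    rw [Ideal.mem_span_singleton_mul]
    have hu : (Finsupp.single (0 : Fin 4) m11 + Finsupp.single 1 m21) ≤ d :=
      fat_le_single_add (by decide) (by omega) (by omega)
    refine ⟨monomial (d - (Finsupp.single 0 m11 + Finsupp.single 1 m21)) (coeff d p), ?_, ?_⟩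
    · rw [fat_span_pow_eq 0 3 (by decide)]
      apply fat_monomial_mem
      show m12 - m11 ≤ _
      rw [Finsupp.tsub_apply, Finsupp.tsub_apply]
      simp [Finsupp.add_apply, Finsupp.single_apply]
      omega
    · rw [X_pow_eq_monomial, X_pow_eq_monomial, monomial_mul, one_mul, monomial_mul, one_mul]
      congr 1
      rw [add_tsub_cancel_of_le hu]
  · apply Submodule.mem_sup_left
    rw [Ideal.mem_span_singleton_mul]
    have hu : Finsupp.single (2 : Fin 4) 1 ≤ d := Finsupp.single_le_iff.mpr (by omega)
    refine ⟨monomial (d - Finsupp.single 2 1) (coeff d p), ?_, ?_⟩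
    · refine ⟨⟨?_, ?_⟩, ?_⟩
      · rw [fat_span_pow_eq 0 2 (by decide)]
        apply fat_monomial_mem
        show m11 - 1 ≤ _
        rw [Finsupp.tsub_apply, Finsupp.tsub_apply]
        simp [Finsupp.add_apply, Finsupp.single_apply]
        omega
      · rw [fat_span_pow_eq 0 3 (by decide)]
        apply fat_monomial_mem
        show m12 ≤ _
        rw [Finsupp.tsub_apply, Finsupp.tsub_apply]
        simp [Finsupp.add_apply, Finsupp.single_apply]
        omega
      · rw [fat_span_pow_eq 1 2 (by decide)]
        apply fat_monomial_mem
        show m21 - 1 ≤ _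
        rw [Finsupp.tsub_apply, Finsupp.tsub_apply]
        simp [Finsupp.add_apply, Finsupp.single_apply]
        omega
    · rw [fat_X_eq, monomial_mul, one_mul]
      congr 1
      rw [add_tsub_cancel_of_le hu]

private lemma fat_X_inf (m11 m12 m21 : ℕ) :
    (Ideal.span {(X 2 : MvPolynomial (Fin 4) k)} *
        (Ideal.span {X 0, X 2} ^ (m11 - 1) ⊓ Ideal.span {X 0, X 3} ^ m12 ⊓
          Ideal.span {X 1, X 2} ^ (m21 - 1))) ⊓
      (Ideal.span {(X 0 : MvPolynomial (Fin 4) k) ^ m11 * X 1 ^ m21} *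
        Ideal.span {X 0, X 3} ^ (m12 - m11)) ≤
    Ideal.span {(X 2 : MvPolynomial (Fin 4) k) * X 0 ^ m11 * X 1 ^ m21} *
      Ideal.span {X 0, X 3} ^ (m12 - m11) := by
  intro p hp
  simp only [Submodule.mem_inf] at hp
  obtain ⟨hpI, hpJ⟩ := hp
  show p ∈ Ideal.span {(X 2 : MvPolynomial (Fin 4) k) * X 0 ^ m11 * X 1 ^ m21} *
      Ideal.span {X 0, X 3} ^ (m12 - m11)
  have hg : (X 0 : MvPolynomial (Fin 4) k) ^ m11 * X 1 ^ m21 =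
      monomial (Finsupp.single 0 m11 + Finsupp.single 1 m21) 1 := by
    rw [X_pow_eq_monomial, X_pow_eq_monomial, monomial_mul, one_mul]
  have hg2 : (X 2 : MvPolynomial (Fin 4) k) * X 0 ^ m11 * X 1 ^ m21 =
      monomial (Finsupp.single 2 1 + Finsupp.single 0 m11 + Finsupp.single 1 m21) 1 := by
    rw [fat_X_eq, X_pow_eq_monomial, X_pow_eq_monomial, monomial_mul, monomial_mul,
      one_mul, one_mul]
  have hX2 : p ∈ Ideal.span {(X 2 : MvPolynomial (Fin 4) k)} := Ideal.mul_le_left hpI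
  have himg : ({(X 2 : MvPolynomial (Fin 4) k)} : Set (MvPolynomial (Fin 4) k)) =
      (fun s => monomial s (1:k)) '' {Finsupp.single 2 1} := by
    rw [Set.image_singleton, fat_X_eq]
  rw [himg, mem_ideal_span_monomial_image] at hX2
  rw [hg, fat_span_pow_eq 0 3 (by decide), fat_mem_monomial_mul] at hpJ
  rw [hg2, fat_span_pow_eq 0 3 (by decide), fat_mem_monomial_mul]
  intro d hd
  obtain ⟨s, hs, hsd⟩ := hpJ d hd
  obtain ⟨s2, hs2, hs2d⟩ := hX2 d hd
  rw [Set.mem_singleton_iff] at hs2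
  subst hs2
  simp only [Set.mem_setOf_eq] at hs
  have hd2 : 1 ≤ d 2 := by
    have := Finsupp.le_def.mp hs2d 2
    simpa [Finsupp.single_eq_same] using this
  have h0 := Finsupp.le_def.mp hsd 0
  have h1 := Finsupp.le_def.mp hsd 1
  have h3 := Finsupp.le_def.mp hsd 3
  simp [Finsupp.add_apply, Finsupp.single_apply] at h0 h1 h3
  refine ⟨Finsupp.single 0 (s 0) + Finsupp.single 3 (s 3), ?_, ?_⟩
  · show m12 - m11 ≤ _
    simp [Finsupp.add_apply, Finsupp.single_apply]
    omega
  · refine Finsupp.le_def.mpr fun x => ?_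
    fin_cases x <;>
      simp [Finsupp.add_apply, Finsupp.single_apply] <;> omega

private lemma fat_det_ne_zero {M : Type*} [AddCommGroup M] [Module k M]
    {x y u v : M} {a b c d : k} (hu : a • x + b • y = u) (hv : c • x + d • y = v)
    (hind : LinearIndependent k ![u, v]) : a * d - b * c ≠ 0 := by
  intro hdet
  have h1 : d • u + (-b) • v = 0 := by
    rw [← hu, ← hv]
    have h : d • (a • x + b • y) + (-b) • (c • x + d • y) = (a * d - b * c) • x := by module
    rw [h, hdet, zero_smul]
  have h2 : (-c) • u + a • v = 0 := by
    rw [← hu, ← hv]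
    have h : (-c) • (a • x + b • y) + a • (c • x + d • y) = (a * d - b * c) • y := by module
    rw [h, hdet, zero_smul]
  obtain ⟨hd, hb⟩ := LinearIndependent.pair_iff.mp hind d (-b) h1
  obtain ⟨hc, ha⟩ := LinearIndependent.pair_iff.mp hind (-c) a h2
  have hu0 : u = 0 := by rw [← hu, ha, neg_eq_zero.mp hb, zero_smul, zero_smul, add_zero]
  exact hind.ne_zero 0 (by simp [hu0])

variable {A : Type*} [CommRing A]

private lemma fat_J_le_left (h1 h2 x : A) (T : Ideal A) (m11 m21 : ℕ) {n : ℕ} (hn : n ≤ m11) :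
    Ideal.span {h1 ^ m11 * h2 ^ m21} * T ≤ Ideal.span {h1, x} ^ n :=
  calc Ideal.span {h1 ^ m11 * h2 ^ m21} * T ≤ Ideal.span {h1 ^ m11 * h2 ^ m21} :=
        Ideal.mul_le_left
    _ = Ideal.span {h1} ^ m11 * Ideal.span {h2} ^ m21 := by
        rw [Ideal.span_singleton_pow, Ideal.span_singleton_pow,
          Ideal.span_singleton_mul_span_singleton]
    _ ≤ Ideal.span {h1} ^ m11 := Ideal.mul_le_left
    _ ≤ Ideal.span {h1, x} ^ m11 :=
        Ideal.pow_right_mono (Ideal.span_mono (Set.singleton_subset_iff.mpr (by simp))) _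
    _ ≤ Ideal.span {h1, x} ^ n := Ideal.pow_le_pow_right hn

private lemma fat_J_le_right (h1 h2 x : A) (T : Ideal A) (m11 m21 : ℕ) {n : ℕ} (hn : n ≤ m21) :
    Ideal.span {h1 ^ m11 * h2 ^ m21} * T ≤ Ideal.span {h2, x} ^ n :=
  calc Ideal.span {h1 ^ m11 * h2 ^ m21} * T ≤ Ideal.span {h1 ^ m11 * h2 ^ m21} :=
        Ideal.mul_le_left
    _ = Ideal.span {h1} ^ m11 * Ideal.span {h2} ^ m21 := by
        rw [Ideal.span_singleton_pow, Ideal.span_singleton_pow,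
          Ideal.span_singleton_mul_span_singleton]
    _ ≤ Ideal.span {h2} ^ m21 := Ideal.mul_le_right
    _ ≤ Ideal.span {h2, x} ^ m21 :=
        Ideal.pow_right_mono (Ideal.span_mono (Set.singleton_subset_iff.mpr (by simp))) _
    _ ≤ Ideal.span {h2, x} ^ n := Ideal.pow_le_pow_right hn

private lemma fat_J_le_B (h1 h2 v2 : A) (m11 m12 m21 : ℕ) {n : ℕ}
    (hn : n ≤ m11 + (m12 - m11)) :
    Ideal.span {h1 ^ m11 * h2 ^ m21} * Ideal.span {h1, v2} ^ (m12 - m11) ≤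
      Ideal.span {h1, v2} ^ n :=
  calc Ideal.span {h1 ^ m11 * h2 ^ m21} * Ideal.span {h1, v2} ^ (m12 - m11)
      = (Ideal.span {h1} ^ m11 * Ideal.span {h2} ^ m21) * Ideal.span {h1, v2} ^ (m12 - m11) := by
        rw [Ideal.span_singleton_pow, Ideal.span_singleton_pow,
          Ideal.span_singleton_mul_span_singleton]
    _ = (Ideal.span {h1} ^ m11 * Ideal.span {h1, v2} ^ (m12 - m11)) * Ideal.span {h2} ^ m21 := by
        ring
    _ ≤ Ideal.span {h1} ^ m11 * Ideal.span {h1, v2} ^ (m12 - m11) := Ideal.mul_le_left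
    _ ≤ Ideal.span {h1, v2} ^ m11 * Ideal.span {h1, v2} ^ (m12 - m11) :=
        Ideal.mul_mono_left
          (Ideal.pow_right_mono (Ideal.span_mono (Set.singleton_subset_iff.mpr (by simp))) _)
    _ = Ideal.span {h1, v2} ^ (m11 + (m12 - m11)) := (pow_add _ _ _).symm
    _ ≤ Ideal.span {h1, v2} ^ n := Ideal.pow_le_pow_right hn

private lemma fat_I_le (v1 h x : A) (T : Ideal A) {m n : ℕ} (hT : T ≤ Ideal.span {h, v1} ^ (m - 1))
    (hn : n ≤ 1 + (m - 1)) :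
    Ideal.span {v1} * T ≤ Ideal.span {h, v1} ^ n :=
  calc Ideal.span {v1} * T ≤ Ideal.span {v1} * Ideal.span {h, v1} ^ (m - 1) :=
        Ideal.mul_mono_right hT
    _ ≤ Ideal.span {h, v1} ^ 1 * Ideal.span {h, v1} ^ (m - 1) := by
        rw [pow_one]
        exact Ideal.mul_mono_left (Ideal.span_mono (Set.singleton_subset_iff.mpr (by simp)))
    _ = Ideal.span {h, v1} ^ (1 + (m - 1)) := (pow_add _ _ _).symm
    _ ≤ Ideal.span {h, v1} ^ n := Ideal.pow_le_pow_right hn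

private lemma fat_easy_sup (h1 h2 v1 v2 : A) (m11 m12 m21 : ℕ) :
    Ideal.span {v1} * (Ideal.span {h1, v1} ^ (m11 - 1) ⊓ Ideal.span {h1, v2} ^ m12 ⊓
        Ideal.span {h2, v1} ^ (m21 - 1)) ⊔
      Ideal.span {h1 ^ m11 * h2 ^ m21} * Ideal.span {h1, v2} ^ (m12 - m11) ≤
    Ideal.span {h1, v1} ^ m11 ⊓ Ideal.span {h1, v2} ^ m12 ⊓ Ideal.span {h2, v1} ^ m21 := by
  apply sup_le
  · refine le_inf (le_inf ?_ ?_) ?_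
    · exact fat_I_le v1 h1 v2 _ (le_trans inf_le_left inf_le_left) (by omega)
    · exact le_trans (Ideal.mul_mono_right (le_trans inf_le_left inf_le_right)) Ideal.mul_le_right
    · exact fat_I_le v1 h2 h1 _ inf_le_right (by omega)
  · refine le_inf (le_inf ?_ ?_) ?_
    · exact fat_J_le_left h1 h2 v1 _ m11 m21 le_rfl
    · exact fat_J_le_B h1 h2 v2 m11 m12 m21 (by omega)
    · exact fat_J_le_right h1 h2 v1 _ m11 m21 le_rfl

private lemma fat_easy_inf (h1 h2 v1 v2 : A) (m11 m12 m21 : ℕ) :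
    Ideal.span {v1 * h1 ^ m11 * h2 ^ m21} * Ideal.span {h1, v2} ^ (m12 - m11) ≤
      (Ideal.span {v1} * (Ideal.span {h1, v1} ^ (m11 - 1) ⊓ Ideal.span {h1, v2} ^ m12 ⊓
          Ideal.span {h2, v1} ^ (m21 - 1))) ⊓
        (Ideal.span {h1 ^ m11 * h2 ^ m21} * Ideal.span {h1, v2} ^ (m12 - m11)) := by
  have hre : Ideal.span {v1 * h1 ^ m11 * h2 ^ m21} * Ideal.span {h1, v2} ^ (m12 - m11) =
      Ideal.span {v1} * (Ideal.span {h1 ^ m11 * h2 ^ m21} * Ideal.span {h1, v2} ^ (m12 - m11)) := by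
    rw [mul_assoc v1, ← Ideal.span_singleton_mul_span_singleton, mul_assoc]
  rw [hre]
  refine le_inf ?_ Ideal.mul_le_right
  apply Ideal.mul_mono_right
  refine le_inf (le_inf ?_ ?_) ?_
  · exact fat_J_le_left h1 h2 v1 _ m11 m21 (by omega)
  · exact fat_J_le_B h1 h2 v2 m11 m12 m21 (by omega)
  · exact fat_J_le_right h1 h2 v1 _ m11 m21 (by omega)

end FatAux

/-- Proposition 2.10: with `I = v1·I_{W1}` and `J = h1^{m11} h2^{m21}·(h1,v2)^{(m12-m11)_+}`,
the sequence `0 → I ∩ J → I ⊕ J → I + J → 0` (with maps `x ↦ (x, -x)` and `(x,y) ↦ x + y`)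
is a short exact sequence of `R`-modules; moreover `I + J = I_W` and
`I ∩ J = v1 h1^{m11} h2^{m21}·(h1,v2)^{(m12-m11)_+}`. -/
theorem fat_three_points_short_exact_sequence
    {k : Type*} [Field k]
    (h1 h2 v1 v2 : MvPolynomial (Fin 4) k)
    (hh1 : h1 ∈ Submodule.span k ({X 0, X 1} : Set (MvPolynomial (Fin 4) k)))
    (hh2 : h2 ∈ Submodule.span k ({X 0, X 1} : Set (MvPolynomial (Fin 4) k)))
    (hhind : LinearIndependent k ![h1, h2])
    (hv1 : v1 ∈ Submodule.span k ({X 2, X 3} : Set (MvPolynomial (Fin 4) k)))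
    (hv2 : v2 ∈ Submodule.span k ({X 2, X 3} : Set (MvPolynomial (Fin 4) k)))
    (hvind : LinearIndependent k ![v1, v2])
    (m11 m12 m21 : ℕ) (hm : m21 ≤ m12)
    (IW IW1 : Ideal (MvPolynomial (Fin 4) k))
    (hIW : IW = Ideal.span {h1, v1} ^ m11 ⊓ Ideal.span {h1, v2} ^ m12 ⊓
        Ideal.span {h2, v1} ^ m21)
    (hIW1 : IW1 = Ideal.span {h1, v1} ^ (m11 - 1) ⊓ Ideal.span {h1, v2} ^ m12 ⊓
        Ideal.span {h2, v1} ^ (m21 - 1))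
    (I J : Ideal (MvPolynomial (Fin 4) k))
    (hI : I = Ideal.span {v1} * IW1)
    (hJ : J = Ideal.span {h1 ^ m11 * h2 ^ m21} * Ideal.span {h1, v2} ^ (m12 - m11)) :
    Function.Injective
      (LinearMap.prod (Submodule.inclusion (inf_le_left : I ⊓ J ≤ I))
        (-(Submodule.inclusion (inf_le_right : I ⊓ J ≤ J)))) ∧
    LinearMap.range
      (LinearMap.prod (Submodule.inclusion (inf_le_left : I ⊓ J ≤ I))
        (-(Submodule.inclusion (inf_le_right : I ⊓ J ≤ J)))) =
      LinearMap.ker (LinearMap.coprod (Submodule.subtype I) (Submodule.subtype J)) ∧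
    LinearMap.range (LinearMap.coprod (Submodule.subtype I) (Submodule.subtype J)) =
      I ⊔ J ∧
    I ⊔ J = IW ∧
    I ⊓ J = Ideal.span {v1 * h1 ^ m11 * h2 ^ m21} * Ideal.span {h1, v2} ^ (m12 - m11) := by
  obtain ⟨a, b, hab⟩ := Submodule.mem_span_pair.mp hh1
  obtain ⟨c, d, hcd⟩ := Submodule.mem_span_pair.mp hh2
  obtain ⟨a', b', hab'⟩ := Submodule.mem_span_pair.mp hv1
  obtain ⟨c', d', hcd'⟩ := Submodule.mem_span_pair.mp hv2
  have hDh : a * d - b * c ≠ 0 := fat_det_ne_zero hab hcd hhind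
  have hDv : a' * d' - b' * c' ≠ 0 := fat_det_ne_zero hab' hcd' hvind
  have key1 : d • h1 + (-b) • h2 = (a * d - b * c) • X 0 := by rw [← hab, ← hcd]; module
  have key2 : (-c) • h1 + a • h2 = (a * d - b * c) • X 1 := by rw [← hab, ← hcd]; module
  have key3 : d' • v1 + (-b') • v2 = (a' * d' - b' * c') • X 2 := by rw [← hab', ← hcd']; module
  have key4 : (-c') • v1 + a' • v2 = (a' * d' - b' * c') • X 3 := by rw [← hab', ← hcd']; module
  set F : Fin 4 → MvPolynomial (Fin 4) k := ![h1, h2, v1, v2] with hFdef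
  set G : Fin 4 → MvPolynomial (Fin 4) k :=
    ![(a * d - b * c)⁻¹ • (d • X 0 + (-b) • X 1),
      (a * d - b * c)⁻¹ • ((-c) • X 0 + a • X 1),
      (a' * d' - b' * c')⁻¹ • (d' • X 2 + (-b') • X 3),
      (a' * d' - b' * c')⁻¹ • ((-c') • X 2 + a' • X 3)] with hGdef
  have hFG : ∀ i, aeval F (G i) = X i := by
    intro i
    fin_cases i
    · show aeval F ((a * d - b * c)⁻¹ • (d • X 0 + (-b) • X 1)) = X 0
      rw [map_smul, map_add, map_smul, map_smul, aeval_X, aeval_X]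
      show (a * d - b * c)⁻¹ • (d • h1 + (-b) • h2) = X 0
      rw [key1, smul_smul, inv_mul_cancel₀ hDh, one_smul]
    · show aeval F ((a * d - b * c)⁻¹ • ((-c) • X 0 + a • X 1)) = X 1
      rw [map_smul, map_add, map_smul, map_smul, aeval_X, aeval_X]
      show (a * d - b * c)⁻¹ • ((-c) • h1 + a • h2) = X 1
      rw [key2, smul_smul, inv_mul_cancel₀ hDh, one_smul]
    · show aeval F ((a' * d' - b' * c')⁻¹ • (d' • X 2 + (-b') • X 3)) = X 2
      rw [map_smul, map_add, map_smul, map_smul, aeval_X, aeval_X]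
      show (a' * d' - b' * c')⁻¹ • (d' • v1 + (-b') • v2) = X 2
      rw [key3, smul_smul, inv_mul_cancel₀ hDv, one_smul]
    · show aeval F ((a' * d' - b' * c')⁻¹ • ((-c') • X 2 + a' • X 3)) = X 3
      rw [map_smul, map_add, map_smul, map_smul, aeval_X, aeval_X]
      show (a' * d' - b' * c')⁻¹ • ((-c') • v1 + a' • v2) = X 3
      rw [key4, smul_smul, inv_mul_cancel₀ hDv, one_smul]
  have hGF : ∀ i, aeval G (F i) = X i := by
    intro i
    fin_cases i
    · show aeval G h1 = X 0
      rw [← hab, map_add, map_smul, map_smul, aeval_X, aeval_X]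
      show a • ((a * d - b * c)⁻¹ • (d • X 0 + (-b) • X 1)) +
        b • ((a * d - b * c)⁻¹ • ((-c) • X 0 + a • X 1)) = X 0
      rw [smul_comm a, smul_comm b, ← smul_add]
      have h : a • (d • X 0 + (-b) • X 1) + b • ((-c) • X 0 + a • X 1) =
          (a * d - b * c) • (X 0 : MvPolynomial (Fin 4) k) := by module
      rw [h, smul_smul, inv_mul_cancel₀ hDh, one_smul]
    · show aeval G h2 = X 1
      rw [← hcd, map_add, map_smul, map_smul, aeval_X, aeval_X]
      show c • ((a * d - b * c)⁻¹ • (d • X 0 + (-b) • X 1)) +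
        d • ((a * d - b * c)⁻¹ • ((-c) • X 0 + a • X 1)) = X 1
      rw [smul_comm c, smul_comm d, ← smul_add]
      have h : c • (d • X 0 + (-b) • X 1) + d • ((-c) • X 0 + a • X 1) =
          (a * d - b * c) • (X 1 : MvPolynomial (Fin 4) k) := by module
      rw [h, smul_smul, inv_mul_cancel₀ hDh, one_smul]
    · show aeval G v1 = X 2
      rw [← hab', map_add, map_smul, map_smul, aeval_X, aeval_X]
      show a' • ((a' * d' - b' * c')⁻¹ • (d' • X 2 + (-b') • X 3)) +
        b' • ((a' * d' - b' * c')⁻¹ • ((-c') • X 2 + a' • X 3)) = X 2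
      rw [smul_comm a', smul_comm b', ← smul_add]
      have h : a' • (d' • X 2 + (-b') • X 3) + b' • ((-c') • X 2 + a' • X 3) =
          (a' * d' - b' * c') • (X 2 : MvPolynomial (Fin 4) k) := by module
      rw [h, smul_smul, inv_mul_cancel₀ hDv, one_smul]
    · show aeval G v2 = X 3
      rw [← hcd', map_add, map_smul, map_smul, aeval_X, aeval_X]
      show c' • ((a' * d' - b' * c')⁻¹ • (d' • X 2 + (-b') • X 3)) +
        d' • ((a' * d' - b' * c')⁻¹ • ((-c') • X 2 + a' • X 3)) = X 3
      rw [smul_comm c', smul_comm d', ← smul_add]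
      have h : c' • (d' • X 2 + (-b') • X 3) + d' • ((-c') • X 2 + a' • X 3) =
          (a' * d' - b' * c') • (X 3 : MvPolynomial (Fin 4) k) := by module
      rw [h, smul_smul, inv_mul_cancel₀ hDv, one_smul]
  let e : MvPolynomial (Fin 4) k ≃ₐ[k] MvPolynomial (Fin 4) k :=
    AlgEquiv.ofAlgHom (aeval F) (aeval G)
      (MvPolynomial.algHom_ext fun i => by
        simp only [AlgHom.comp_apply, aeval_X, AlgHom.id_apply]; exact hFG i)
      (MvPolynomial.algHom_ext fun i => by
        simp only [AlgHom.comp_apply, aeval_X, AlgHom.id_apply]; exact hGF i)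
  let σ : MvPolynomial (Fin 4) k ≃+* MvPolynomial (Fin 4) k := e.toRingEquiv
  have hσX : ∀ i, σ (X i) = F i := fun i => by
    show aeval F (X i) = F i
    rw [aeval_X]
  have hσ0 : σ (X 0) = h1 := hσX 0
  have hσ1 : σ (X 1) = h2 := hσX 1
  have hσ2 : σ (X 2) = v1 := hσX 2
  have hσ3 : σ (X 3) = v2 := hσX 3
  have hmap_pair : ∀ (x y : MvPolynomial (Fin 4) k) (n : ℕ),
      Ideal.map σ (Ideal.span {x, y} ^ n) = Ideal.span {σ x, σ y} ^ n := fun x y n => by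
    rw [Ideal.map_pow, Ideal.map_span, Set.image_pair]
  have hmap_inf : ∀ (P Q : Ideal (MvPolynomial (Fin 4) k)),
      Ideal.map σ (P ⊓ Q) = Ideal.map σ P ⊓ Ideal.map σ Q := fun P Q => by
    rw [← Ideal.comap_symm, ← Ideal.comap_symm, ← Ideal.comap_symm, Ideal.comap_inf]
  have hg' : σ (X 0 ^ m11 * X 1 ^ m21) = h1 ^ m11 * h2 ^ m21 := by
    rw [map_mul, map_pow, map_pow, hσ0, hσ1]
  have hg2' : σ (X 2 * X 0 ^ m11 * X 1 ^ m21) = v1 * h1 ^ m11 * h2 ^ m21 := by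
    rw [map_mul, map_mul, map_pow, map_pow, hσ0, hσ1, hσ2]
  have hmapIW1 : Ideal.map σ (Ideal.span {X 0, X 2} ^ (m11 - 1) ⊓
      Ideal.span {X 0, X 3} ^ m12 ⊓ Ideal.span {X 1, X 2} ^ (m21 - 1)) =
      Ideal.span {h1, v1} ^ (m11 - 1) ⊓ Ideal.span {h1, v2} ^ m12 ⊓
        Ideal.span {h2, v1} ^ (m21 - 1) := by
    rw [hmap_inf, hmap_inf, hmap_pair, hmap_pair, hmap_pair, hσ0, hσ1, hσ2, hσ3]
  have hmapIW : Ideal.map σ (Ideal.span {X 0, X 2} ^ m11 ⊓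
      Ideal.span {X 0, X 3} ^ m12 ⊓ Ideal.span {X 1, X 2} ^ m21) =
      Ideal.span {h1, v1} ^ m11 ⊓ Ideal.span {h1, v2} ^ m12 ⊓
        Ideal.span {h2, v1} ^ m21 := by
    rw [hmap_inf, hmap_inf, hmap_pair, hmap_pair, hmap_pair, hσ0, hσ1, hσ2, hσ3]
  have hmapI : Ideal.map σ (Ideal.span {X 2} * (Ideal.span {X 0, X 2} ^ (m11 - 1) ⊓
      Ideal.span {X 0, X 3} ^ m12 ⊓ Ideal.span {X 1, X 2} ^ (m21 - 1))) =
      Ideal.span {v1} * (Ideal.span {h1, v1} ^ (m11 - 1) ⊓ Ideal.span {h1, v2} ^ m12 ⊓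
        Ideal.span {h2, v1} ^ (m21 - 1)) := by
    rw [Ideal.map_mul, Ideal.map_span, Set.image_singleton, hσ2, hmapIW1]
  have hmapJ : Ideal.map σ (Ideal.span {X 0 ^ m11 * X 1 ^ m21} *
      Ideal.span {X 0, X 3} ^ (m12 - m11)) =
      Ideal.span {h1 ^ m11 * h2 ^ m21} * Ideal.span {h1, v2} ^ (m12 - m11) := by
    rw [Ideal.map_mul, Ideal.map_span, Set.image_singleton, hg', hmap_pair, hσ0, hσ3]
  have hmapK : Ideal.map σ (Ideal.span {X 2 * X 0 ^ m11 * X 1 ^ m21} *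
      Ideal.span {X 0, X 3} ^ (m12 - m11)) =
      Ideal.span {v1 * h1 ^ m11 * h2 ^ m21} * Ideal.span {h1, v2} ^ (m12 - m11) := by
    rw [Ideal.map_mul, Ideal.map_span, Set.image_singleton, hg2', hmap_pair, hσ0, hσ3]
  refine ⟨?_, ?_, ?_, ?_, ?_⟩
  · intro x y hxy
    have h := congrArg Prod.fst hxy
    simp only [LinearMap.prod_apply, Function.prod] at h
    exact Submodule.inclusion_injective _ h
  · ext ⟨x, y⟩
    simp only [LinearMap.mem_range, LinearMap.mem_ker, LinearMap.prod_apply, Function.prod,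
      LinearMap.coprod_apply, Submodule.coe_subtype, LinearMap.neg_apply, Prod.mk.injEq]
    constructor
    · rintro ⟨z, hz1, hz2⟩
      rw [← hz1, ← hz2]
      simp
    · intro hxy
      have hyx : (x : MvPolynomial (Fin 4) k) = -(y : MvPolynomial (Fin 4) k) :=
        eq_neg_of_add_eq_zero_left hxy
      have hxJ : (x : MvPolynomial (Fin 4) k) ∈ J := by
        rw [hyx]; exact neg_mem y.2
      refine ⟨⟨(x : MvPolynomial (Fin 4) k), ⟨x.2, hxJ⟩⟩, ?_, ?_⟩
      · exact Subtype.ext rfl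
      · apply Subtype.ext
        show -((x : MvPolynomial (Fin 4) k)) = (y : MvPolynomial (Fin 4) k)
        rw [hyx, neg_neg]
  · rw [LinearMap.range_coprod, Submodule.range_subtype, Submodule.range_subtype]
  · rw [hI, hJ, hIW, hIW1]
    apply le_antisymm
    · exact fat_easy_sup h1 h2 v1 v2 m11 m12 m21
    · rw [← hmapIW, ← hmapI, ← hmapJ, ← Ideal.map_sup]
      exact Ideal.map_mono (fat_X_sup m11 m12 m21)
  · rw [hI, hJ, hIW1]
    apply le_antisymm
    · rw [← hmapI, ← hmapJ, ← hmap_inf, ← hmapK]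
      exact Ideal.map_mono (fat_X_inf m11 m12 m21)
    · exact fat_easy_inf h1 h2 v1 v2 m11 m12 m21
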